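/- arXiv:1904.08351 — 2 statements merged into one kernel-verified Lean document; each statement's English description precedes it below -/
import Mathlib

section
/- Let n ≥ 2 be even and let 0 ≤ r ≤ n−1 be an integer. Write w_n^I = ((λ_1,ρ_1),…,(λ_κ,ρ_κ)) (so λ_1 = n−1). Then the number of positive normal forms on n of the shape ((l_1',ρ_1),…,(l_κ',ρ_κ)) with l_i' ≤ λ_i for all i and l_1' = n−1−r equals C(n−2−r, r), where C denotes the blobbed Catalan triangle. (This is the number i_{n,r} of grids obtained from G(w_n^I) by adding dots exclusively on its left, keeping affine length one, with exactly r dots added in the leftmost non-empty column.) -/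
/-- Auxiliary (index-shifted) version of the blobbed Catalan triangle:
`blobbedCAux (i+1) (j+1) = C(i,j)`. -/
def blobbedCAux : ℕ → ℕ → ℕ
  | 0, j => if j % 2 = 0 then 1 else 0
  | 1, j => if j % 2 = 1 then 1 else 0
  | _ + 2, 0 => 0
  | i + 2, j + 1 => blobbedCAux (i + 1) j + blobbedCAux (i + 1) (j + 2)

/-- The blobbed Catalan triangle `C(i,j)`, defined for integers `i, j ≥ -1`:
`C(i,j) = 1` if `i ∈ {-1,0}` and `i+j` is even, `C(i,j) = 0` if `i ∈ {-1,0}` and `i+j`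
is odd, `C(i,-1) = 0` for `i ≥ 1`, and `C(i,j) = C(i-1,j-1) + C(i-1,j+1)` for
`i ≥ 1`, `j ≥ 0`. -/
def blobbedC (i j : ℤ) : ℕ := blobbedCAux (i + 1).toNat (j + 1).toNat

/-- `w` is a positive normal form on `n`: a sequence of blocks `(l_i, r_i)` with
`n ≥ l_1 ≥ … ≥ l_k ≥ 0`, `n ≥ r_1 ≥ … ≥ r_k ≥ 0`, `l_i ≤ r_i` for all `i`,
where `l` may repeat (consecutively) only at the value `0` and `r` may repeat only
at the value `n`. -/
def IsPNF (n : ℤ) (w : List (ℤ × ℤ)) : Prop :=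
  (∀ p ∈ w, 0 ≤ p.1 ∧ p.1 ≤ p.2 ∧ p.2 ≤ n) ∧
  List.Chain' (fun p q : ℤ × ℤ =>
    q.1 ≤ p.1 ∧ q.2 ≤ p.2 ∧ (q.1 = p.1 → p.1 = 0) ∧ (q.2 = p.2 → p.2 = n)) w

/-- The affine length of a normal form: the number of blocks whose right endpoint is `n`. -/
def affineLength (n : ℤ) (w : List (ℤ × ℤ)) : ℕ :=
  w.countP (fun p => p.2 = n)

/-- `numPNF n s` is the number `a(n,s)` of positive normal forms on `n` of affine length `s`. -/
noncomputable def numPNF (n : ℤ) (s : ℕ) : ℕ :=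
  Nat.card {w : List (ℤ × ℤ) // IsPNF n w ∧ affineLength n w = s}

/-- The grid of a normal form `((l_1,r_1),…,(l_k,r_k))`:
`{(i,j) ∈ ℤ² : 1 ≤ i ≤ k, l_i ≤ j ≤ r_i}`. -/
def grid (w : List (ℤ × ℤ)) : Set (ℤ × ℤ) :=
  {p | ∃ i : ℕ, i < w.length ∧ p.1 = (i : ℤ) + 1 ∧
    (w.getD i (0, 0)).1 ≤ p.2 ∧ p.2 ≤ (w.getD i (0, 0)).2}

/-- `G` contains a horizontal translate of `G'`. -/
def ContainsTranslate (G G' : Set (ℤ × ℤ)) : Prop :=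
  ∃ m : ℤ, ∀ p ∈ G', ((p.1 + m, p.2) : ℤ × ℤ) ∈ G

/-- The normal form `w_n^I`. -/
def wI (n : ℤ) : List (ℤ × ℤ) :=
  if n = 1 then [(1, 1), (0, 1)]
  else if Even n then
    (n - 1, n) :: (((List.range ((n - 2) / 2).toNat).map
      fun t : ℕ => (n - 3 - 2 * (t : ℤ), n - 1 - 2 * (t : ℤ))) ++ [(0, 1)])
  else
    (n, n) :: (n - 2, n) :: (((List.range ((n - 3) / 2).toNat).map
      fun t : ℕ => (n - 4 - 2 * (t : ℤ), n - 2 - 2 * (t : ℤ))) ++ [(0, 1)])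

/-- The normal form `w_n^J`. -/
def wJ (n : ℤ) : List (ℤ × ℤ) :=
  if Even n then
    (n, n) :: (n - 2, n) :: (((List.range ((n - 2) / 2).toNat).map
      fun t : ℕ => (n - 4 - 2 * (t : ℤ), n - 2 - 2 * (t : ℤ))) ++ [(0, 0)])
  else
    (n - 1, n) :: (((List.range ((n - 1) / 2).toNat).map
      fun t : ℕ => (n - 3 - 2 * (t : ℤ), n - 1 - 2 * (t : ℤ))) ++ [(0, 0)])

/-- `numBadPNF n s` is the number `d(n,s)` of positive normal forms on `n` of affine
length `s` whose grid contains a horizontal translate of `G(w_n^I)` or of `G(w_n^J)`. -/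
noncomputable def numBadPNF (n : ℤ) (s : ℕ) : ℕ :=
  Nat.card {w : List (ℤ × ℤ) // IsPNF n w ∧ affineLength n w = s ∧
    (ContainsTranslate (grid w) (grid (wI n)) ∨ ContainsTranslate (grid w) (grid (wJ n)))}


/-- number of ±1 walks of length `a` from height `j` staying nonnegative -/
def cnt : ℕ → ℕ → ℕ
  | 0, _ => 1
  | a + 1, 0 => cnt a 1
  | a + 1, j + 1 => cnt a j + cnt a (j + 2)

lemma blobbedCAux_succ_zero (a : ℕ) : blobbedCAux (a + 1) 0 = 0 := by
  match a with
  | 0 => simp [blobbedCAux]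
  | a + 1 => rfl

lemma aux_eq_cnt : ∀ a j : ℕ, (a + j) % 2 = 0 → blobbedCAux (a + 1) (j + 1) = cnt a j := by
  intro a
  induction a with
  | zero =>
    intro j hj
    have : (j + 1) % 2 = 1 := by omega
    simp [blobbedCAux, this, cnt]
  | succ a ih =>
    intro j hj
    cases j with
    | zero =>
      show blobbedCAux (a + 1) 0 + blobbedCAux (a + 1) 2 = cnt (a + 1) 0
      rw [blobbedCAux_succ_zero]
      have := ih 1 (by omega)
      simp only [Nat.zero_add] at this ⊢
      rw [this]
      rfl
    | succ j =>
      show blobbedCAux (a + 1) (j + 1) + blobbedCAux (a + 1) (j + 3) = cnt (a + 1) (j + 1)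
      rw [ih j (by omega), show j + 3 = (j + 2) + 1 from rfl, ih (j + 2) (by omega)]
      rfl

lemma L1 : ∀ a j : ℕ, cnt a (j + 1) = 1 + ∑ u ∈ Finset.range a, cnt u (a + j - 1 - u) := by
  intro a
  induction a with
  | zero => intro j; simp [cnt]
  | succ a ih =>
    intro j
    have h1 : cnt (a + 1) (j + 1) = cnt a j + cnt a (j + 2) := rfl
    have h2 := ih (j + 1)
    have h3 : ∑ u ∈ Finset.range (a + 1), cnt u (a + 1 + j - 1 - u)
        = (∑ u ∈ Finset.range a, cnt u (a + (j + 1) - 1 - u)) + cnt a j := by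
      rw [Finset.sum_range_succ]
      congr 1
      · apply Finset.sum_congr rfl
        intro u hu
        simp only [Finset.mem_range] at hu
        congr 1
        omega
      · congr 1
        omega
    rw [h1, h3, h2]
    omega

/-- counting function for decreasing sequences below a bounds list -/
noncomputable def vcount : List ℤ → ℤ → ℕ
  | [], _ => 1
  | b :: bs, c =>
      ∑ v ∈ Finset.Icc 0 (min b (if c = 0 then 0 else c - 1)), vcount bs v

/-- bounds list for `n = 2*(m+1)` : `[2m-1, 2m-3, …, 1, 0]` -/
def B : ℕ → List ℤ
  | 0 => [0]
  | m + 1 => (2 * (m : ℤ) + 1) :: B m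

lemma sum_Icc_toNat (f : ℤ → ℕ) : ∀ t : ℕ,
    (∑ v ∈ Finset.Icc (0 : ℤ) (t : ℤ), f v) = ∑ u ∈ Finset.range (t + 1), f u := by
  intro t
  induction t with
  | zero => simp
  | succ t ih =>
    have h : Finset.Icc (0 : ℤ) ((t : ℤ) + 1) = insert ((t : ℤ) + 1) (Finset.Icc (0 : ℤ) t) := by
      ext x
      simp only [Finset.mem_Icc, Finset.mem_insert]
      omega
    rw [Finset.sum_range_succ, show (((t + 1 : ℕ)) : ℤ) = (t : ℤ) + 1 by push_cast; ring, h,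
      Finset.sum_insert (by simp), ih]
    push_cast
    omega

lemma vB0 : ∀ m : ℕ, vcount (B m) 0 = 1 := by
  intro m
  induction m with
  | zero => simp [B, vcount]
  | succ m ih =>
    show (∑ v ∈ Finset.Icc 0 (min (2 * (m : ℤ) + 1) (if (0:ℤ) = 0 then 0 else 0 - 1)),
      vcount (B m) v) = 1
    rw [if_pos rfl]
    have : min (2 * (m : ℤ) + 1) 0 = 0 := by omega
    rw [this]
    simp [ih]

lemma vB_succ : ∀ m c : ℕ, c ≤ 2 * m → vcount (B m) ((c : ℤ) + 1) = cnt c (2 * m - c) := by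
  intro m
  induction m with
  | zero =>
    intro c hc
    have hc0 : c = 0 := by omega
    subst hc0
    show (∑ v ∈ Finset.Icc 0 (min (0:ℤ) (if (0:ℤ) + 1 = 0 then 0 else 0 + 1 - 1)),
      vcount [] v) = cnt 0 0
    norm_num [vcount, cnt]
  | succ m ih =>
    intro c hc
    have hne : ((c : ℤ) + 1) ≠ 0 := by omega
    show (∑ v ∈ Finset.Icc 0 (min (2 * (m : ℤ) + 1) (if (c:ℤ) + 1 = 0 then 0 else (c:ℤ) + 1 - 1)),
      vcount (B m) v) = cnt c (2 * (m + 1) - c)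
    rw [if_neg hne]
    have hmin : min (2 * (m : ℤ) + 1) ((c : ℤ) + 1 - 1) = ((min (2 * m + 1) c : ℕ) : ℤ) := by
      push_cast; omega
    rw [hmin, sum_Icc_toNat (vcount (B m)), Finset.sum_range_succ']
    simp only [Nat.cast_zero, vB0, Nat.cast_add, Nat.cast_one]
    have hsum : ∀ u ∈ Finset.range (min (2 * m + 1) c),
        vcount (B m) ((u : ℤ) + 1) = cnt u (2 * m - u) := by
      intro u hu
      simp only [Finset.mem_range] at hu
      exact ih u (by omega)
    rw [Finset.sum_congr rfl hsum]
    rcases Nat.lt_or_ge c (2 * m + 2) with hlt | hge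
    · -- c ≤ 2m+1
      have hminc : min (2 * m + 1) c = c := by omega
      rw [hminc]
      have hj : 2 * (m + 1) - c = (2 * m + 1 - c) + 1 := by omega
      rw [hj, L1 c (2 * m + 1 - c)]
      have heq : (∑ u ∈ Finset.range c, cnt u (c + (2 * m + 1 - c) - 1 - u))
          = ∑ u ∈ Finset.range c, cnt u (2 * m - u) :=
        Finset.sum_congr rfl (fun u hu => by
          simp only [Finset.mem_range] at hu; congr 1 <;> omega)
      rw [heq]
      omega
    · -- c = 2m+2
      have hceq : c = 2 * m + 2 := by omega
      subst hceq
      have hminc : min (2 * m + 1) (2 * m + 2) = 2 * m + 1 := by omega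
      rw [hminc]
      have h0 : 2 * (m + 1) - (2 * m + 2) = 0 := by omega
      rw [h0]
      have : cnt (2 * m + 2) 0 = cnt (2 * m + 1) 1 := rfl
      rw [this, L1 (2 * m + 1) 0]
      have heq : (∑ u ∈ Finset.range (2 * m + 1), cnt u (2 * m + 1 + 0 - 1 - u))
          = ∑ u ∈ Finset.range (2 * m + 1), cnt u (2 * m - u) :=
        Finset.sum_congr rfl (fun u hu => by
          simp only [Finset.mem_range] at hu; congr 1 <;> omega)
      rw [heq]
      omega

/-- relation for left endpoints: nonincreasing, repeats only at 0 -/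
def relZ (a b : ℤ) : Prop := b ≤ a ∧ (b = a → b = 0)

/-- Finset of all lowered tails below a given bounds list, with previous left endpoint `c` -/
noncomputable def validP : List (ℤ × ℤ) → ℤ → Finset (List (ℤ × ℤ))
  | [], _ => {[]}
  | (b, ρ) :: bs, c =>
      (Finset.Icc 0 (min b (if c = 0 then 0 else c - 1))).biUnion
        fun v => (validP bs v).image (fun t => (v, ρ) :: t)

lemma mem_validP : ∀ (bs : List (ℤ × ℤ)) (c : ℤ) (w : List (ℤ × ℤ)),
    w ∈ validP bs c ↔ w.length = bs.length ∧
      (∀ i < bs.length, 0 ≤ (w.getD i (0, 0)).1 ∧ (w.getD i (0, 0)).1 ≤ (bs.getD i (0, 0)).1 ∧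
        (w.getD i (0, 0)).2 = (bs.getD i (0, 0)).2) ∧
      List.Chain' relZ (c :: w.map Prod.fst) := by
  intro bs
  induction bs with
  | nil =>
    intro c w
    constructor
    · intro hw
      have : w = [] := by simpa [validP] using hw
      subst this
      refine ⟨rfl, by simp, List.isChain_singleton _⟩
    · rintro ⟨hlen, -, -⟩
      have : w = [] := List.length_eq_zero_iff.mp hlen
      subst this
      simp [validP]
  | cons p bs ih =>
    obtain ⟨b, ρ⟩ := p
    intro c w
    constructor
    · intro hw
      simp only [validP, Finset.mem_biUnion, Finset.mem_image, Finset.mem_Icc] at hw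
      obtain ⟨v, ⟨hv0, hvm⟩, t, ht, rfl⟩ := hw
      obtain ⟨hlen, hpt, hch⟩ := (ih v t).mp ht
      have hvb : v ≤ b := le_trans hvm (min_le_left _ _)
      have hvc : v ≤ c ∧ (v = c → v = 0) := by
        rcases eq_or_ne c 0 with hc | hc
        · subst hc; simp only [if_pos rfl] at hvm; constructor <;> omega
        · rw [if_neg hc] at hvm
          have : v ≤ c - 1 := le_trans hvm (min_le_right _ _)
          constructor <;> omega
      refine ⟨by simp [hlen], ?_, ?_⟩
      · intro i hi
        cases i with
        | zero => simpa using ⟨hv0, hvb⟩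
        | succ i =>
          simp only [List.getD_cons_succ]
          exact hpt i (by simpa using hi)
      · simp only [List.map_cons]
        exact List.isChain_cons_cons.mpr ⟨⟨hvc.1, hvc.2⟩, hch⟩
    · rintro ⟨hlen, hpt, hch⟩
      match w with
      | [] => simp at hlen
      | q :: t =>
        obtain ⟨v, ρ'⟩ := q
        have h0 := hpt 0 (by simp)
        simp only [List.getD_cons_zero] at h0
        obtain ⟨hv0, hvb, hρ⟩ := h0
        simp only [List.Chain', List.map_cons, List.isChain_cons_cons] at hch
        obtain ⟨⟨hvc, hveq⟩, hch'⟩ := hch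
        simp only [validP, Finset.mem_biUnion, Finset.mem_image, Finset.mem_Icc]
        refine ⟨v, ⟨hv0, ?_⟩, t, ?_, by simp_all⟩
        · rcases eq_or_ne c 0 with hc | hc
          · subst hc; rw [if_pos rfl]; omega
          · rw [if_neg hc]
            have : v ≠ c := fun h => hc (by omega)
            omega
        · refine (ih v t).mpr ⟨by simpa using hlen, ?_, hch'⟩
          intro i hi
          have := hpt (i + 1) (by simpa using Nat.succ_lt_succ hi)
          simpa using this
  
lemma card_validP : ∀ (bs : List (ℤ × ℤ)) (c : ℤ),
    (validP bs c).card = vcount (bs.map Prod.fst) c := by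
  intro bs
  induction bs with
  | nil => intro c; simp [validP, vcount]
  | cons p bs ih =>
    obtain ⟨b, ρ⟩ := p
    intro c
    show ((Finset.Icc 0 (min b (if c = 0 then 0 else c - 1))).biUnion
        fun v => (validP bs v).image (fun t => (v, ρ) :: t)).card = _
    rw [Finset.card_biUnion]
    · simp only [List.map_cons]
      show _ = ∑ v ∈ Finset.Icc 0 (min b (if c = 0 then 0 else c - 1)), vcount (bs.map Prod.fst) v
      apply Finset.sum_congr rfl
      intro v _
      rw [Finset.card_image_of_injective _ (List.cons_injective), ih]
    · intro x _ y _ hxy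
      rw [Function.onFun, Finset.disjoint_left]
      rintro z hz hz'
      simp only [Finset.mem_image] at hz hz'
      obtain ⟨t, -, rfl⟩ := hz
      obtain ⟨t', -, ht'⟩ := hz'
      apply hxy
      exact ((Prod.mk.injEq _ _ _ _).mp (List.head_eq_of_cons_eq ht'.symm)).1

lemma B_spec : ∀ m : ℕ,
    B m = (List.range m).map (fun t : ℕ => 2 * (m : ℤ) - 1 - 2 * (t : ℤ)) ++ [0] := by
  intro m
  induction m with
  | zero => simp [B]
  | succ m ih =>
    rw [show B (m + 1) = (2 * (m : ℤ) + 1) :: B m from rfl, ih, List.range_succ_eq_map]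
    simp only [List.map_cons, List.map_map, List.cons_append]
    congr 1
    · push_cast; ring
    · congr 1
      apply List.map_congr_left
      intro t _
      simp only [Function.comp_apply]
      push_cast; ring

lemma chain'_iff_getD {α : Type*} (d : α) (R : α → α → Prop) (l : List α) :
    l.Chain' R ↔ ∀ i : ℕ, i + 1 < l.length → R (l.getD i d) (l.getD (i + 1) d) := by
  rw [show l.Chain' R = l.IsChain R from rfl, List.isChain_iff_getElem]
  constructor
  · intro h i hi
    rw [List.getD_eq_getElem _ _ (by omega), List.getD_eq_getElem _ _ hi]
    have := h i (by omega)
    simpa [List.get_eq_getElem] using this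
  · intro h i hi
    have := h i (by omega)
    rw [List.getD_eq_getElem _ _ (by omega), List.getD_eq_getElem _ _ (by omega)] at this
    simpa [List.get_eq_getElem] using this

/-- For `n ≥ 2` even and `0 ≤ r ≤ n-1`: the number `i_{n,r}` of positive normal
forms obtained from `w_n^I` by lowering left endpoints of its blocks (no blocks added),
with leftmost block starting at `n-1-r`, equals `C(n-2-r, r)`. -/
theorem count_lowerings_wI (n r : ℤ) (hn : 2 ≤ n) (hev : Even n)
    (hr0 : 0 ≤ r) (hr : r ≤ n - 1) :
    Nat.card {w : List (ℤ × ℤ) // IsPNF n w ∧ w.length = (wI n).length ∧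
      (∀ i < (wI n).length, (w.getD i (0, 0)).2 = ((wI n).getD i (0, 0)).2 ∧
        (w.getD i (0, 0)).1 ≤ ((wI n).getD i (0, 0)).1) ∧
      (w.getD 0 (0, 0)).1 = n - 1 - r} = blobbedC (n - 2 - r) r := by
  classical
  obtain ⟨k, hk⟩ := id hev
  set M : ℕ := (k - 1).toNat with hMdef
  have hn2 : n = 2 * (M : ℤ) + 2 := by omega
  have hne1 : n ≠ 1 := by omega
  set c : ℤ := n - 1 - r with hc
  set tl : List (ℤ × ℤ) := ((List.range M).map
      fun t : ℕ => (n - 3 - 2 * (t : ℤ), n - 1 - 2 * (t : ℤ))) ++ [((0 : ℤ), (1 : ℤ))] with htl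
  have hM2 : ((n - 2) / 2).toNat = M := by omega
  have hwI : wI n = (n - 1, n) :: tl := by
    simp only [wI, if_neg hne1, if_pos hev, hM2, htl]
  have htlen : tl.length = M + 1 := by simp [htl]
  have hK : (wI n).length = M + 2 := by rw [hwI]; simp [htlen]
  have htl_lt : ∀ i : ℕ, i < M →
      tl.getD i (0, 0) = (n - 3 - 2 * (i : ℤ), n - 1 - 2 * (i : ℤ)) := by
    intro i hi
    rw [htl, List.getD_append _ _ _ _ (by simpa using hi),
      List.getD_eq_getElem _ _ (by simpa using hi)]
    simp
  have htl_last : tl.getD M (0, 0) = (0, 1) := by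
    rw [htl, List.getD_append_right _ _ _ _ (by simp)]
    simp
  have hgw0 : (wI n).getD 0 (0, 0) = (n - 1, n) := by rw [hwI]; rfl
  have hgws : ∀ i : ℕ, (wI n).getD (i + 1) (0, 0) = tl.getD i (0, 0) := by
    intro i; rw [hwI, List.getD_cons_succ]
  set T : Finset (List (ℤ × ℤ)) := (validP tl c).image (fun t => ((c, n) : ℤ × ℤ) :: t) with hT
  have key : ∀ w : List (ℤ × ℤ), (IsPNF n w ∧ w.length = (wI n).length ∧
      (∀ i < (wI n).length, (w.getD i (0, 0)).2 = ((wI n).getD i (0, 0)).2 ∧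
        (w.getD i (0, 0)).1 ≤ ((wI n).getD i (0, 0)).1) ∧
      (w.getD 0 (0, 0)).1 = c) ↔ w ∈ T := by
    intro w
    constructor
    · rintro ⟨⟨hpt, hch⟩, hlen, hidx, hhead⟩
      rw [hK] at hlen hidx
      obtain ⟨p, t, rfl⟩ := List.exists_cons_of_ne_nil
        (by intro h; rw [h] at hlen; simp at hlen : w ≠ [])
      rw [List.getD_cons_zero] at hhead
      have hp2 : p.2 = n := by
        have := (hidx 0 (by omega)).1
        rw [List.getD_cons_zero, hgw0] at this
        exact this
      have hp : p = (c, n) := by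
        obtain ⟨p1, p2⟩ := p
        simp only [Prod.mk.injEq]
        exact ⟨hhead, hp2⟩
      subst hp
      have hlt : t.length = M + 1 := by simpa using hlen
      refine Finset.mem_image.mpr ⟨t, ?_, rfl⟩
      rw [mem_validP]
      refine ⟨by rw [hlt, htlen], ?_, ?_⟩
      · intro i hi
        rw [htlen] at hi
        have h1 := hidx (i + 1) (by omega)
        rw [List.getD_cons_succ, hgws] at h1
        refine ⟨?_, h1.2, h1.1⟩
        have hm : t.getD i (0, 0) ∈ ((c, n) : ℤ × ℤ) :: t := by
          apply List.mem_cons_of_mem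
          rw [List.getD_eq_getElem _ _ (by omega : i < t.length)]
          exact List.getElem_mem _
        exact (hpt _ hm).1
      · show List.Chain' relZ ((((c, n) : ℤ × ℤ) :: t).map Prod.fst)
        rw [show List.Chain' relZ _ = List.IsChain relZ _ from rfl, List.isChain_map]
        exact hch.imp (fun a b hab => ⟨hab.1, fun h => by rw [h]; exact hab.2.2.1 h⟩)
    · intro hw
      obtain ⟨t, ht, rfl⟩ := Finset.mem_image.mp hw
      rw [mem_validP] at ht
      obtain ⟨hlen_t, hpt_t, hch_t⟩ := ht
      rw [htlen] at hlen_t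
      have hs : ∀ j : ℕ, j < M + 2 →
          ((((c, n) : ℤ × ℤ) :: t).getD j (0, 0)).2
            = if j = 0 then n else n + 1 - 2 * (j : ℤ) := by
        intro j hj
        cases j with
        | zero => simp
        | succ j =>
          rw [List.getD_cons_succ, if_neg (Nat.succ_ne_zero j)]
          have h3 := (hpt_t j (by rw [htlen]; omega)).2.2
          rw [h3]
          rcases Nat.lt_or_ge j M with hjM | hjM
          · rw [htl_lt j hjM]
            push_cast
            ring_nf
          · have hjeq : j = M := by omega
            subst hjeq
            rw [htl_last]
            push_cast
            omega
      refine ⟨⟨?_, ?_⟩, ?_, ?_, by simp⟩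
      · -- pointwise bounds
        intro p hp
        rcases List.mem_cons.mp hp with rfl | hp'
        · refine ⟨?_, ?_, ?_⟩ <;> simp <;> omega
        · obtain ⟨i, hi, rfl⟩ := List.mem_iff_getElem.mp hp'
          have hg : t[i] = t.getD i (0, 0) := (List.getD_eq_getElem t (0, 0) hi).symm
          rw [hg]
          have hi' : i < M + 1 := by omega
          obtain ⟨h0, h1, h2⟩ := hpt_t i (by rw [htlen]; omega)
          rcases Nat.lt_or_ge i M with hiM | hiM
          · rw [htl_lt i hiM] at h1 h2
            simp only at h1 h2
            refine ⟨h0, by omega, by omega⟩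
          · have hieq : i = M := by omega
            subst hieq
            rw [htl_last] at h1 h2
            simp only at h1 h2
            refine ⟨h0, by omega, by omega⟩
      · -- chain
        rw [chain'_iff_getD ((0,0) : ℤ × ℤ)]
        intro i hi
        simp only [List.length_cons, hlen_t] at hi
        have hfstg : ∀ j : ℕ, j < M + 2 →
            (c :: t.map Prod.fst).getD j 0 = ((((c, n) : ℤ × ℤ) :: t).getD j (0, 0)).1 := by
          intro j hj
          cases j with
          | zero => simp
          | succ j =>
            rw [List.getD_cons_succ, List.getD_cons_succ,
              List.getD_eq_getElem _ _ (by simp [hlen_t]; omega),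
              List.getD_eq_getElem _ _ (by omega : j < t.length), List.getElem_map]
        have hrel := (chain'_iff_getD (0 : ℤ) relZ _).mp hch_t i
          (by simp [hlen_t]; omega)
        rw [hfstg i (by omega), hfstg (i + 1) (by omega)] at hrel
        have hP := hs i (by omega)
        have hQ := hs (i + 1) (by omega)
        rw [if_neg (Nat.succ_ne_zero i)] at hQ
        push_cast at hQ
        refine ⟨hrel.1, ?_, fun h => by rw [← h]; exact hrel.2 h, ?_⟩
        · by_cases hi0 : i = 0
          · subst hi0; rw [if_pos rfl] at hP; omega
          · rw [if_neg hi0] at hP; omega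
        · intro hQP
          exfalso
          by_cases hi0 : i = 0
          · subst hi0; rw [if_pos rfl] at hP; omega
          · rw [if_neg hi0] at hP
            have hic : (1:ℤ) ≤ (i:ℤ) := by exact_mod_cast Nat.one_le_iff_ne_zero.mpr hi0
            omega
      · -- length
        rw [hK]; simp [hlen_t]
      · -- pointwise vs wI
        intro i hi
        rw [hK] at hi
        cases i with
        | zero =>
          rw [List.getD_cons_zero, hgw0]
          exact ⟨rfl, by simp; omega⟩
        | succ i =>
          rw [List.getD_cons_succ, hgws]
          have := hpt_t i (by rw [htlen]; omega)
          exact ⟨this.2.2, this.2.1⟩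
  have hcard : Nat.card {w : List (ℤ × ℤ) // IsPNF n w ∧ w.length = (wI n).length ∧
      (∀ i < (wI n).length, (w.getD i (0, 0)).2 = ((wI n).getD i (0, 0)).2 ∧
        (w.getD i (0, 0)).1 ≤ ((wI n).getD i (0, 0)).1) ∧
      (w.getD 0 (0, 0)).1 = c} = T.card := by
    rw [Nat.card_congr (Equiv.subtypeEquivRight key)]
    exact Nat.card_eq_finsetCard T
  rw [hcard, hT, Finset.card_image_of_injective _ List.cons_injective, card_validP]
  have hmapfst : tl.map Prod.fst = B M := by
    rw [B_spec, htl]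
    simp only [List.map_append, List.map_map, List.map_cons, List.map_nil]
    congr 1
    apply List.map_congr_left
    intro t _
    simp only [Function.comp_apply]
    omega
  rw [hmapfst]
  rcases eq_or_lt_of_le hr with hre | hrlt
  · have hc0 : c = 0 := by omega
    rw [hc0, vB0]
    have h1 : (n - 2 - r + 1).toNat = 0 := by omega
    have h2 : (r + 1).toNat = 2 * M + 2 := by omega
    have h3 : (2 * M + 2) % 2 = 0 := by omega
    simp only [blobbedC, h1, h2]
    simp [blobbedCAux, h3]
  · set a : ℕ := (n - 2 - r).toNat with ha
    have hca : c = (a : ℤ) + 1 := by omega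
    have haM : a ≤ 2 * M := by omega
    rw [hca, vB_succ M a haM]
    have hres : 2 * M - a = r.toNat := by omega
    rw [hres]
    have h1 : (n - 2 - r + 1).toNat = a + 1 := by omega
    have h2 : (r + 1).toNat = r.toNat + 1 := by omega
    simp only [blobbedC, h1, h2]
    exact (aux_eq_cnt a r.toNat (by omega)).symm
end

section
/- Let n ≥ 1 and let C denote the blobbed Catalan triangle. If n is even then d(n,1) = C(n,0)², and if n is odd then 4·d(n,1) = C(n,1)² (i.e., d(n,1) = (C(n,1)/2)²). Here d(n,1) counts the positive normal forms on n of affine length 1 whose grid contains a horizontal translate of G(w_n^I) or of G(w_n^J). -/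
/-! ### Numeric lemmas about the triangle -/

lemma blobbedCAux_zero (j : ℕ) : blobbedCAux 0 j = if j % 2 = 0 then 1 else 0 := rfl
lemma blobbedCAux_one (j : ℕ) : blobbedCAux 1 j = if j % 2 = 1 then 1 else 0 := rfl
lemma blobbedCAux_rec (i j : ℕ) :
    blobbedCAux (i + 2) (j + 1) = blobbedCAux (i + 1) j + blobbedCAux (i + 1) (j + 2) := rfl
lemma blobbedCAux_bot (i : ℕ) : blobbedCAux (i + 2) 0 = 0 := rfl

/-- `C(i, i+2k) = 2^i` : above the diagonal the triangle is saturated. -/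
lemma blobbedCAux_pow (i k : ℕ) : blobbedCAux (i + 1) (i + 1 + 2 * k) = 2 ^ i := by
  induction i generalizing k with
  | zero => simp [blobbedCAux_one, Nat.add_mul_mod_self_left]
  | succ i ih =>
    have h1 : i + 1 + 1 + 2 * k = (i + 1 + 2 * k) + 1 := by ring
    rw [h1, blobbedCAux_rec]
    have h2 : i + 1 + 2 * k + 2 = i + 1 + 2 * (k + 1) := by ring
    rw [h2, ih k, ih (k+1)]
    ring

/-- first diagonal partial sum lemma -/
lemma blobbedCAux_diag1 (m t : ℕ) (ht : t ≤ 2 * m + 1) :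
    ∑ x ∈ Finset.range (t + 1), blobbedCAux x (2 * m + 2 - x)
      = blobbedCAux (t + 1) (2 * m + 3 - t) := by
  induction t with
  | zero =>
    simp [blobbedCAux_zero, blobbedCAux_one, Nat.add_mod]
  | succ t ih =>
    rw [Finset.sum_range_succ, ih (by omega)]
    have h1 : 2 * m + 2 - (t + 1) = (2 * m + 1 - t - 1) + 1 := by omega
    have h2 : 2 * m + 3 - (t + 1) = (2 * m + 1 - t - 1) + 1 + 1 := by omega
    have h3 : 2 * m + 3 - t = (2 * m + 1 - t - 1) + 1 + 2 := by omega
    rw [h1, h2, h3, blobbedCAux_rec]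
    ring

/-- variant with doubled value at `x = 0` -/
lemma blobbedCAux_diag1' (m t : ℕ) (ht : t ≤ 2 * m + 1) :
    ∑ x ∈ Finset.range (t + 1), (if x = 0 then 2 else blobbedCAux (x + 1) (2 * m + 1 - x))
      = blobbedCAux (t + 2) (2 * m + 2 - t) := by
  induction t with
  | zero =>
    have : 2 * m + 2 - 0 = (2*m+1) + 1 := by omega
    simp only [Finset.sum_range_one, if_pos rfl, this, blobbedCAux_rec]
    simp [blobbedCAux_one, Nat.add_mod]
  | succ t ih =>
    rw [Finset.sum_range_succ, ih (by omega), if_neg (by omega)]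
    have h5 : 2 * m + 2 - (t + 1) = (2 * m - t) + 1 := by omega
    have h6 : 2 * m + 2 - t = (2 * m - t) + 2 := by omega
    have h7 : 2 * m + 1 - (t + 1) = 2 * m - t := by omega
    rw [h5, h6, h7, blobbedCAux_rec (t + 1) (2 * m - t)]
    ring

/-- second diagonal partial-sum lemma -/
lemma blobbedCAux_diag2 (a : ℕ) (ha : 1 ≤ a) (w : ℕ) (hw : a ≤ w) :
    ∑ x ∈ Finset.Ico a w, blobbedCAux (x + 1) (x + 2 - a) = blobbedCAux (w + 1) (w - a) := by
  induction w, hw using Nat.le_induction with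
  | base =>
    rw [Finset.Ico_self, Finset.sum_empty]
    obtain ⟨b, rfl⟩ : ∃ b, a = b + 1 := ⟨a - 1, by omega⟩
    simp [blobbedCAux_bot]
  | succ w hw ih =>
    rw [Finset.sum_Ico_succ_top hw, ih]
    have h1 : w + 2 - a = (w - a) + 2 := by omega
    have h2 : w + 1 - a = (w - a) + 1 := by omega
    rw [h1, h2, blobbedCAux_rec w (w - a)]

/-! relations -/
def lrel (a b : ℤ) : Prop := b ≤ a ∧ (b = a → a = 0)
def grel (a b : ℤ) : Prop := b < a

/-- strictly decreasing lists of nonneg integers `< y` -/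
def RFree : ℕ → Finset (List ℤ)
  | y => insert [] ((Finset.range y).attach.biUnion fun x =>
      have : x.1 < y := Finset.mem_range.mp x.2
      (RFree x.1).image (((x.1 : ℤ)) :: ·))

lemma RFree_eq (y : ℕ) : RFree y = insert [] ((Finset.range y).attach.biUnion fun x =>
    (RFree x.1).image (((x.1 : ℤ)) :: ·)) := by rw [RFree]

lemma mem_RFree (y : ℕ) (rs : List ℤ) :
    rs ∈ RFree y ↔ List.Chain' grel ((y : ℤ) :: rs) ∧ ∀ x ∈ rs, 0 ≤ x := by
  induction y using Nat.strong_induction_on generalizing rs with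
  | _ y ih =>
  rw [RFree_eq]
  constructor
  · intro h
    rcases Finset.mem_insert.mp h with rfl | h
    · simp; exact List.isChain_singleton _
    · obtain ⟨x, _, hmem⟩ := Finset.mem_biUnion.mp h
      obtain ⟨t, ht, rfl⟩ := Finset.mem_image.mp hmem
      have hx : x.1 < y := Finset.mem_range.mp x.2
      obtain ⟨hc, hnn⟩ := (ih x.1 hx t).mp ht
      refine ⟨List.isChain_cons_cons.mpr ⟨show (x.1:ℤ) < (y:ℤ) by exact_mod_cast hx, hc⟩, ?_⟩
      intro z hz
      rcases List.mem_cons.mp hz with rfl | hz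
      · positivity
      · exact hnn z hz
  · rintro ⟨hc, hnn⟩
    match rs with
    | [] => exact Finset.mem_insert_self _ _
    | a :: t =>
      obtain ⟨hay, hct⟩ := List.isChain_cons_cons.mp hc
      have ha0 : 0 ≤ a := hnn a (List.mem_cons_self)
      have hay' : a < (y:ℤ) := hay
      have hx : a.toNat < y := by omega
      refine Finset.mem_insert_of_mem (Finset.mem_biUnion.mpr ⟨⟨a.toNat, Finset.mem_range.mpr hx⟩,
        Finset.mem_attach _ _, Finset.mem_image.mpr ⟨t, ?_, by simp [Int.toNat_of_nonneg ha0]⟩⟩)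
      refine (ih a.toNat hx t).mpr ⟨?_, fun z hz => hnn z (List.mem_cons_of_mem _ hz)⟩
      rw [Int.toNat_of_nonneg ha0]
      exact hct

lemma two_pow_sum (y : ℕ) : ∑ i ∈ Finset.range y, 2 ^ i = 2 ^ y - 1 := by
  induction y with
  | zero => simp
  | succ k ihk =>
    rw [Finset.sum_range_succ, ihk]
    have : 1 ≤ 2 ^ k := Nat.one_le_two_pow
    omega

lemma card_RFree (y : ℕ) : (RFree y).card = 2 ^ y := by
  induction y using Nat.strong_induction_on with
  | _ y ih =>
  rw [RFree_eq]
  rw [Finset.card_insert_of_notMem (by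
    simp only [Finset.mem_biUnion, Finset.mem_image, not_exists, not_and]
    rintro x - t - h
    exact (List.cons_ne_nil _ _ h).elim )]
  rw [Finset.card_biUnion (by
    rintro ⟨x, hx⟩ - ⟨x', hx'⟩ - hne
    simp only [Finset.disjoint_left, Finset.mem_image]
    rintro l ⟨t, -, rfl⟩ ⟨t', -, h⟩
    apply hne
    ext
    have := (List.cons.injEq _ _ _ _).mp h
    have h' : x = x' := by exact_mod_cast this.1.symm
    subst h'; rfl )]
  have : ∀ x : {x // x ∈ Finset.range y}, ((RFree x.1).image (((x.1 : ℤ)) :: ·)).card = 2 ^ x.1 := by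
    rintro ⟨x, hx⟩
    rw [Finset.card_image_of_injective _ (fun a b h => (List.cons.injEq _ _ _ _).mp h |>.2), ih x (Finset.mem_range.mp hx)]
  rw [Finset.sum_congr rfl (fun x _ => this x)]
  rw [Finset.sum_attach (Finset.range y) (fun i => 2 ^ i)]
  rw [two_pow_sum]
  have : 1 ≤ 2 ^ y := Nat.one_le_two_pow
  omega

/-! ### the `L`-side finsets -/
noncomputable def LF (e : ℕ) : ℕ → ℕ → Finset (List ℤ)
  | 0, _ => {[]}
  | m + 1, y => (Finset.range (min (2 * m + e) (y - 1) + 1)).biUnion fun x =>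
      (LF e m x).image (((x : ℤ)) :: ·)

/-! ### the `R`-side finsets -/
noncomputable def RF (e : ℕ) : ℕ → ℕ → Finset (List ℤ)
  | 0, y => RFree y
  | m + 1, y => (Finset.Ico (2 * m + e) y).biUnion fun x =>
      (RF e m x).image (((x : ℤ)) :: ·)

lemma mem_LF (e m : ℕ) : ∀ (y : ℕ) (ls : List ℤ),
    ls ∈ LF e m y ↔ ls.length = m ∧ List.Chain' lrel ((y : ℤ) :: ls) ∧
      ∀ i < m, 0 ≤ ls.getD i 0 ∧ ls.getD i 0 ≤ 2 * ((m:ℤ) - 1 - i) + e := by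
  induction m with
  | zero =>
    intro y ls
    simp only [LF, Finset.mem_singleton]
    constructor
    · rintro rfl; simp; exact List.isChain_singleton _
    · rintro ⟨h, -, -⟩; exact List.length_eq_zero_iff.mp h
  | succ m ih =>
    intro y ls
    simp only [LF, Finset.mem_biUnion, Finset.mem_image, Finset.mem_range]
    constructor
    · rintro ⟨x, hx, t, ht, rfl⟩
      have hx' : x ≤ min (2 * m + e) (y - 1) := by omega
      obtain ⟨hlen, hchain, hbound⟩ := (ih x t).mp ht
      refine ⟨by simp [hlen], ?_, ?_⟩
      · refine List.isChain_cons_cons.mpr ?_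
        constructor
        · constructor
          · show (x:ℤ) ≤ (y:ℤ); omega
          · intro h
            have : x = y := by exact_mod_cast h
            omega
        · exact hchain
      · intro i hi
        match i with
        | 0 =>
          simp only [List.getD_cons_zero]
          constructor
          · positivity
          · have : x ≤ 2 * m + e := by omega
            push_cast
            omega
        | i + 1 =>
          simp only [List.getD_cons_succ]
          have := hbound i (by omega)
          refine ⟨this.1, ?_⟩
          have h := this.2
          push_cast at h ⊢
          linarith
    · rintro ⟨hlen, hchain, hbound⟩
      match ls with
      | [] => simp at hlen
      | a :: t =>
        obtain ⟨⟨hay, haeq⟩, hct⟩ := List.isChain_cons_cons.mp hchain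
        have h0 := hbound 0 (by omega)
        simp only [List.getD_cons_zero] at h0
        refine ⟨a.toNat, ?_, t, ?_, by rw [Int.toNat_of_nonneg h0.1]⟩
        · have h1 := h0.2
          have h2 : a.toNat ≤ 2 * m + e := by push_cast at h1; omega
          have h3 : a.toNat ≤ y - 1 := by
            rcases eq_or_ne (a : ℤ) (y : ℤ) with h | h
            · have := haeq h
              omega
            · have : (a:ℤ) < (y:ℤ) := lt_of_le_of_ne hay h
              omega
          omega
        · refine (ih a.toNat t).mpr ⟨by simpa using hlen, ?_, ?_⟩
          · rw [Int.toNat_of_nonneg h0.1]; exact hct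
          · intro i hi
            have := hbound (i+1) (by omega)
            simp only [List.getD_cons_succ] at this
            refine ⟨this.1, ?_⟩
            have h := this.2
            push_cast at h ⊢
            linarith

lemma mem_RF (e m : ℕ) : ∀ (y : ℕ) (rs : List ℤ),
    rs ∈ RF e m y ↔ m ≤ rs.length ∧ List.Chain' grel ((y : ℤ) :: rs) ∧ (∀ x ∈ rs, 0 ≤ x) ∧
      ∀ i < m, 2 * ((m:ℤ) - 1 - i) + e ≤ rs.getD i 0 := by
  induction m with
  | zero =>
    intro y rs
    simp only [RF, mem_RFree]
    constructor
    · rintro ⟨h1, h2⟩; exact ⟨by omega, h1, h2, by omega⟩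
    · rintro ⟨-, h1, h2, -⟩; exact ⟨h1, h2⟩
  | succ m ih =>
    intro y rs
    simp only [RF, Finset.mem_biUnion, Finset.mem_image, Finset.mem_Ico]
    constructor
    · rintro ⟨x, hx, t, ht, rfl⟩
      obtain ⟨hlen, hchain, hnn, hbound⟩ := (ih x t).mp ht
      refine ⟨by simp; omega, ?_, ?_, ?_⟩
      · refine List.isChain_cons_cons.mpr ?_
        exact ⟨by show (x:ℤ) < (y:ℤ); exact_mod_cast hx.2, hchain⟩
      · intro z hz
        rcases List.mem_cons.mp hz with rfl | hz
        · positivity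
        · exact hnn z hz
      · intro i hi
        match i with
        | 0 =>
          simp only [List.getD_cons_zero]
          have h1 : (2 * m + e : ℕ) ≤ x := hx.1
          push_cast
          omega
        | i + 1 =>
          simp only [List.getD_cons_succ]
          have h := hbound i (by omega)
          push_cast at h ⊢
          linarith
    · rintro ⟨hlen, hchain, hnn, hbound⟩
      match rs with
      | [] => simp at hlen
      | a :: t =>
        obtain ⟨hay, hct⟩ := List.isChain_cons_cons.mp hchain
        have ha0 : 0 ≤ a := hnn a (List.mem_cons_self)
        have hb := hbound 0 (by omega)
        simp only [List.getD_cons_zero] at hb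
        have hay' : a < (y:ℤ) := hay
        refine ⟨a.toNat, ⟨?_, by omega⟩, t, ?_, by rw [Int.toNat_of_nonneg ha0]⟩
        · push_cast at hb
          omega
        · refine (ih a.toNat t).mpr ⟨by simpa using hlen, ?_, fun z hz => hnn z (List.mem_cons_of_mem _ hz), ?_⟩
          · rw [Int.toNat_of_nonneg ha0]; exact hct
          · intro i hi
            have h := hbound (i+1) (by omega)
            simp only [List.getD_cons_succ] at h
            push_cast at h ⊢
            linarith

lemma card_biUnion_cons (s : Finset ℕ) (F : ℕ → Finset (List ℤ)) :
    (s.biUnion fun x => (F x).image (((x : ℤ)) :: ·)).card = ∑ x ∈ s, (F x).card := by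
  rw [Finset.card_biUnion]
  · exact Finset.sum_congr rfl fun x _ =>
      Finset.card_image_of_injective _ (fun a b h => (List.cons.injEq _ _ _ _).mp h |>.2)
  · intro x _ x' _ hne
    simp only [Finset.disjoint_left, Finset.mem_image]
    rintro l ⟨t, -, rfl⟩ ⟨t', -, h⟩
    exact hne (by exact_mod_cast ((List.cons.injEq _ _ _ _).mp h).1.symm)

lemma card_LF1 : ∀ m y, y ≤ 2 * m + 1 → (LF 1 m y).card = blobbedCAux y (2 * m + 2 - y) := by
  intro m
  induction m with
  | zero =>
    intro y hy
    interval_cases y <;> simp [LF] <;> rfl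
  | succ m ih =>
    intro y hy
    rw [LF, card_biUnion_cons]
    set t := min (2 * m + 1) (y - 1) with hts
    have ht : t ≤ 2 * m + 1 := by omega
    have hsum : ∑ x ∈ Finset.range (t + 1), (LF 1 m x).card
        = ∑ x ∈ Finset.range (t + 1), blobbedCAux x (2 * m + 2 - x) :=
      Finset.sum_congr rfl fun x hx => ih x (by simp at hx; omega)
    rw [hsum, blobbedCAux_diag1 m t ht]
    rcases Nat.eq_zero_or_pos y with rfl | hy1
    · have h1 : t = 0 := by omega
      rw [h1]
      show blobbedCAux 1 (2*m+3) = blobbedCAux 0 (2*(m+1)+2 - 0)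
      rw [blobbedCAux_one, blobbedCAux_zero, if_pos (by omega), if_pos (by omega)]
    · rcases Nat.lt_or_ge y (2*m+3) with h2 | h2
      · have h1 : t = y - 1 := by omega
        rw [h1]
        congr 1 <;> omega
      · have hy' : y = 2*m+3 := by omega
        have h1 : t = 2*m+1 := by omega
        subst hy'
        rw [h1]
        have e1 : 2*m+3 - (2*m+1) = 2 := by omega
        have e2 : 2*(m+1)+2 - (2*m+3) = 1 := by omega
        rw [e1, e2]
        show blobbedCAux (2*m+2) 2 = blobbedCAux (2*m+3) 1
        rw [show 2*m+3 = (2*m+1)+2 from by omega, blobbedCAux_rec (2*m+1) 0,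
          blobbedCAux_bot (2*m)]
        show blobbedCAux (2*m+2) 2 = 0 + blobbedCAux (2*m+1+1) (0+2)
        rw [Nat.zero_add]

lemma card_LF0_zero : ∀ m, (LF 0 m 0).card = 1 := by
  intro m
  induction m with
  | zero => simp [LF]
  | succ m ih =>
    rw [LF, card_biUnion_cons]
    have : min (2*m+0) (0-1) + 1 = 1 := by omega
    rw [this, Finset.sum_range_one, ih]

lemma card_LF0 : ∀ m, 1 ≤ m → ∀ y, 1 ≤ y → y ≤ 2 * m →
    2 * (LF 0 m y).card = blobbedCAux (y + 1) (2 * m + 1 - y) := by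
  intro m
  induction m with
  | zero => omega
  | succ m ih =>
    intro _ y hy1 hy2
    rcases Nat.eq_zero_or_pos m with rfl | hm
    · -- m + 1 = 1
      rw [LF, card_biUnion_cons]
      have h1 : min (2*0+0) (y-1) + 1 = 1 := by omega
      rw [h1, Finset.sum_range_one]
      show 2 * (LF 0 0 0).card = _
      have : (LF 0 0 0).card = 1 := by simp [LF]
      rw [this]
      interval_cases y
      · show 2*1 = blobbedCAux 2 2
        decide
      · show 2*1 = blobbedCAux 3 1
        decide
    · rw [LF, card_biUnion_cons, Finset.mul_sum]
      set t := min (2 * m + 0) (y - 1) with hts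
      have ht : t ≤ 2 * m + 1 := by omega
      have hsum : ∑ x ∈ Finset.range (t + 1), 2 * (LF 0 m x).card
          = ∑ x ∈ Finset.range (t + 1), (if x = 0 then 2 else blobbedCAux (x + 1) (2 * m + 1 - x)) := by
        refine Finset.sum_congr rfl fun x hx => ?_
        rcases Nat.eq_zero_or_pos x with rfl | hx1
        · rw [if_pos rfl, card_LF0_zero m]
        · rw [if_neg (by omega)]
          exact ih hm x hx1 (by simp at hx; omega)
      rw [hsum, blobbedCAux_diag1' m t ht]
      rcases Nat.lt_or_ge y (2*m+2) with h2 | h2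
      · have h1 : t = y - 1 := by omega
        rw [h1]
        congr 1 <;> omega
      · have hy' : y = 2*m+2 := by omega
        have h1 : t = 2*m := by omega
        subst hy'
        rw [h1]
        have e1 : 2*m+2 - (2*m) = 2 := by omega
        have e2 : 2*(m+1)+1 - (2*m+2) = 1 := by omega
        rw [e1, e2]
        show blobbedCAux (2*m+2) 2 = blobbedCAux (2*m+2+1) 1
        rw [show 2*m+2+1 = (2*m+1)+2 from by omega, blobbedCAux_rec (2*m+1) 0,
          blobbedCAux_bot (2*m)]
        show blobbedCAux (2*m+2) 2 = 0 + blobbedCAux (2*m+1+1) (0+2)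
        rw [Nat.zero_add]

lemma card_RF1 : ∀ m y, 2 * m - 1 ≤ y → (RF 1 m y).card = blobbedCAux (y + 1) (y + 1 - 2 * m) := by
  intro m
  induction m with
  | zero =>
    intro y _
    show (RFree y).card = _
    rw [card_RFree, show y + 1 - 2*0 = y + 1 from by omega,
      show y + 1 = (y+1) + 2*0 from by omega, blobbedCAux_pow y 0]
  | succ m ih =>
    intro y hy
    have hy' : 2*m+1 ≤ y := by omega
    rw [RF, card_biUnion_cons]
    have hsum : ∑ x ∈ Finset.Ico (2*m+1) y, (RF 1 m x).card
        = ∑ x ∈ Finset.Ico (2*m+1) y, blobbedCAux (x + 1) (x + 2 - (2*m+1)) := by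
      refine Finset.sum_congr rfl fun x hx => ?_
      simp only [Finset.mem_Ico] at hx
      rw [ih x (by omega)]
      congr 1
      omega
    rw [hsum, blobbedCAux_diag2 (2*m+1) (by omega) y hy']
    congr 1
    omega

lemma card_RF0 : ∀ m y, 2 * m - 1 ≤ y → 2 * (RF 0 m y).card = blobbedCAux (y + 2) (y + 2 - 2 * m) := by
  intro m
  induction m with
  | zero =>
    intro y _
    show 2 * (RFree y).card = _
    rw [card_RFree, show y + 2 - 2*0 = y + 2 from by omega,
      show y + 2 = (y+2) + 2*0 from by omega, blobbedCAux_pow (y+1) 0]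
    ring
  | succ m ih =>
    intro y hy
    have hy' : 2*m+1 ≤ y := by omega
    rw [RF, card_biUnion_cons, Finset.mul_sum]
    have hsum : ∑ x ∈ Finset.Ico (2*m+0) y, 2 * (RF 0 m x).card
        = ∑ x ∈ Finset.Ico (2*m) y, blobbedCAux (x + 2) (x + 2 - 2*m) := by
      refine Finset.sum_congr (by norm_num) fun x hx => ?_
      simp only [Finset.mem_Ico] at hx
      exact ih x (by omega)
    rw [hsum]
    have hre : ∑ x ∈ Finset.Ico (2*m) y, blobbedCAux (x + 2) (x + 2 - 2*m)
        = ∑ u ∈ Finset.Ico (2*m+1) (y+1), blobbedCAux (u + 1) (u + 2 - (2*m+1)) := by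
      rw [← Finset.map_add_right_Ico _ _ 1, Finset.sum_map]
      refine Finset.sum_congr rfl fun x hx => ?_
      simp only [addRightEmbedding_apply]
      congr 1
      omega
    rw [hre, blobbedCAux_diag2 (2*m+1) (by omega) (y+1) (by omega)]
    congr 1
    omega

lemma getD_map_range_append {α : Type*} [Inhabited α] (k : ℕ) (f : ℕ → α) (b d : α) (j : ℕ)
    (hj : j ≤ k) :
    (((List.range k).map f) ++ [b]).getD j d = if j < k then f j else b := by
  rw [List.getD_eq_getElem?_getD, List.getElem?_append]
  simp only [List.length_map, List.length_range]
  split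
  · rename_i h
    rw [List.getElem?_map, List.getElem?_range h]
    simp
  · rename_i h
    have : j - k = 0 := by omega
    rw [this]
    simp

/-- spec of the good word, even case -/
lemma wI_even_spec (n : ℤ) (N m : ℕ) (hn : n = (N:ℤ)) (hm : N = 2 * m) (hm1 : 1 ≤ m) :
    (wI n).length = m + 1 ∧ ∀ i ≤ m,
      (wI n).getD i (0,0) = (max (n - 1 - 2*(i:ℤ)) 0, if i = 0 then n else n + 1 - 2*(i:ℤ)) := by
  have hne : ¬ (n = 1) := by omega
  have hev : Even n := by rw [hn, hm]; exact ⟨m, by push_cast; ring⟩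
  rw [wI, if_neg hne, if_pos hev]
  have hk : ((n - 2) / 2).toNat = m - 1 := by
    rw [hn, hm]
    omega
  rw [hk]
  constructor
  · simp only [List.length_cons, List.length_append, List.length_map, List.length_range,
      List.length_nil]
    omega
  · intro i hi
    match i with
    | 0 =>
      simp only [List.getD_cons_zero, if_pos rfl]
      congr 1
      have : (0:ℤ) ≤ n - 1 - 2*(0:ℕ) := by omega
      push_cast
      omega
    | j + 1 =>
      rw [List.getD_cons_succ, getD_map_range_append _ _ _ _ j (by omega)]
      split
      · rename_i h
        have h1 : (0:ℤ) ≤ n - 1 - 2*(j+1:ℕ) := by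
          have : j + 1 ≤ m - 1 := by omega
          push_cast
          omega
        rw [if_neg (by omega), Prod.mk.injEq]
        constructor
        · rw [max_eq_left (by push_cast at h1 ⊢; omega)]
          push_cast
          ring
        · push_cast
          ring
      · rename_i h
        have hjm : j + 1 = m := by omega
        rw [if_neg (by omega), Prod.mk.injEq]
        constructor
        · rw [max_eq_right (by push_cast; omega)]
        · push_cast
          omega

/-- spec of the good word, odd case -/
lemma wJ_odd_spec (n : ℤ) (N m : ℕ) (hn : n = (N:ℤ)) (hm : N + 1 = 2 * m) (hm1 : 1 ≤ m) :
    (wJ n).length = m + 1 ∧ ∀ i ≤ m,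
      (wJ n).getD i (0,0) = (max (n - 1 - 2*(i:ℤ)) 0, if i = 0 then n else n + 1 - 2*(i:ℤ)) := by
  have hodd : ¬ Even n := by
    rw [hn]
    rintro ⟨r, hr⟩
    omega
  rw [wJ, if_neg hodd]
  have hk : ((n - 1) / 2).toNat = m - 1 := by
    rw [hn]
    omega
  rw [hk]
  constructor
  · simp only [List.length_cons, List.length_append, List.length_map, List.length_range,
      List.length_nil]
    omega
  · intro i hi
    match i with
    | 0 =>
      simp only [List.getD_cons_zero, if_pos rfl]
      congr 1
      push_cast
      omega
    | j + 1 =>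
      rw [List.getD_cons_succ, getD_map_range_append _ _ _ _ j (by omega)]
      split
      · rename_i h
        have h1 : (0:ℤ) ≤ n - 1 - 2*(j+1:ℕ) := by
          have : j + 1 ≤ m - 1 := by omega
          push_cast
          omega
        rw [if_neg (by omega), Prod.mk.injEq]
        constructor
        · rw [max_eq_left (by push_cast at h1 ⊢; omega)]
          push_cast
          ring
        · push_cast
          ring
      · rename_i h
        have hjm : j + 1 = m := by omega
        rw [if_neg (by omega), Prod.mk.injEq]
        constructor
        · rw [max_eq_right (by push_cast; omega)]
        · push_cast
          omega

/-- spec of the wrong word, even case (`wJ`) -/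
lemma wJ_even_spec (n : ℤ) (hn : 1 ≤ n) (hev : Even n) :
    2 ≤ (wJ n).length ∧ ((wJ n).getD 0 (0,0)).1 ≤ n ∧ ((wJ n).getD 0 (0,0)).2 = n ∧
      ((wJ n).getD 1 (0,0)).1 ≤ n ∧ ((wJ n).getD 1 (0,0)).2 = n := by
  rw [wJ, if_pos hev]
  refine ⟨by simp, ?_, ?_, ?_, ?_⟩ <;> simp only [List.getD_cons_zero, List.getD_cons_succ] <;>
    norm_num <;> try omega

/-- spec of the wrong word, odd case (`wI`) -/
lemma wI_odd_spec (n : ℤ) (hn : 1 ≤ n) (hodd : ¬ Even n) :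
    2 ≤ (wI n).length ∧ ((wI n).getD 0 (0,0)).1 ≤ n ∧ ((wI n).getD 0 (0,0)).2 = n ∧
      ((wI n).getD 1 (0,0)).1 ≤ n ∧ ((wI n).getD 1 (0,0)).2 = n := by
  rw [wI]
  rcases eq_or_ne n 1 with rfl | hne
  · norm_num
  · rw [if_neg hne, if_neg hodd]
    refine ⟨by simp, ?_, ?_, ?_, ?_⟩ <;> simp only [List.getD_cons_zero, List.getD_cons_succ] <;>
      norm_num <;> try omega


section Char
variable {n : ℤ}

def vlf (n : ℤ) (i : ℕ) : ℤ := max (n - 1 - 2*(i:ℤ)) 0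
def vrf (n : ℤ) (i : ℕ) : ℤ := if i = 0 then n else n + 1 - 2*(i:ℤ)
def Qpred (n : ℤ) (m : ℕ) (w : List (ℤ × ℤ)) : Prop :=
  IsPNF n w ∧ m + 1 ≤ w.length ∧
  (∀ i, 1 ≤ i → i < w.length → (w.getD i (0,0)).2 ≠ n) ∧
  (∀ i ≤ m, (w.getD i (0,0)).1 ≤ vlf n i ∧ vrf n i ≤ (w.getD i (0,0)).2)


lemma mem_grid (w : List (ℤ × ℤ)) (p : ℤ × ℤ) :
    p ∈ grid w ↔ ∃ i : ℕ, i < w.length ∧ p.1 = (i : ℤ) + 1 ∧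
      (w.getD i (0, 0)).1 ≤ p.2 ∧ p.2 ≤ (w.getD i (0, 0)).2 := Iff.rfl


lemma pnf_bounds {w : List (ℤ × ℤ)} (hw : IsPNF n w) {i : ℕ} (hi : i < w.length) :
    0 ≤ (w.getD i (0,0)).1 ∧ (w.getD i (0,0)).1 ≤ (w.getD i (0,0)).2 ∧ (w.getD i (0,0)).2 ≤ n := by
  rw [List.getD_eq_getElem w (0,0) hi]
  exact hw.1 _ (List.getElem_mem hi)


lemma chain_lt_all {c : ℤ} {l : List ℤ} (h : List.Chain' grel (c :: l)) : ∀ x ∈ l, x < c := by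
  have htrans : Transitive grel := fun _ _ _ h1 h2 => lt_trans h2 h1
  have hp := (@List.isChain_iff_pairwise _ grel _ ⟨fun h1 h2 => htrans h1 h2⟩).mp h
  exact fun x hx => (List.pairwise_cons.mp hp).1 x hx


lemma pnf_fst_mono {w : List (ℤ × ℤ)} (hw : IsPNF n w) {i j : ℕ} (hij : i ≤ j)
    (hj : j < w.length) : (w.getD j (0,0)).1 ≤ (w.getD i (0,0)).1 := by
  have htrans : Transitive (fun p q : ℤ × ℤ => q.1 ≤ p.1) := fun _ _ _ h1 h2 => le_trans h2 h1
  have hc : List.Chain' (fun p q : ℤ × ℤ => q.1 ≤ p.1) w :=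
    List.IsChain.imp (fun p q hpq => hpq.1) hw.2
  have hp := (@List.isChain_iff_pairwise _ (fun p q : ℤ × ℤ => q.1 ≤ p.1) _ ⟨fun h1 h2 => htrans h1 h2⟩).mp hc
  rcases eq_or_lt_of_le hij with rfl | hlt
  · exact le_refl _
  · have hi : i < w.length := lt_trans hlt hj
    rw [List.getD_eq_getElem w (0,0) hj, List.getD_eq_getElem w (0,0) hi]
    exact (List.pairwise_iff_getElem.mp hp) i j hi hj hlt


/-- chain via getElem, convenience -/
lemma chain'_iff_getElem {α : Type*} (R : α → α → Prop) (l : List α) :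
    List.Chain' R l ↔ ∀ i (h : i + 1 < l.length), R (l[i]'(by omega)) (l[i+1]'h) := by
  show List.IsChain R l ↔ _
  rw [List.isChain_iff_getElem]


def Phi (m : ℕ) (n : ℤ) (p : List ℤ × List ℤ) : List (ℤ × ℤ) :=
  (p.1 ++ List.replicate (p.2.length + 1 - m) 0).zip (n :: p.2)


/-- `affineLength = 1` structure -/
lemma aff_one_iff {w : List (ℤ × ℤ)} (hw : IsPNF n w) :
    affineLength n w = 1 ↔ (0 < w.length ∧ (w.getD 0 (0,0)).2 = n ∧
      ∀ i, 1 ≤ i → i < w.length → (w.getD i (0,0)).2 ≠ n) := by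
  match w with
  | [] => simp [affineLength]
  | a :: t =>
    constructor
    · intro h
      have h0 : a.2 = n := by
        by_contra hne
        rw [affineLength, List.countP_cons, if_neg (by simpa using hne), Nat.add_zero] at h
        obtain ⟨x, hx, hx2⟩ := List.countP_pos_iff.mp (h ▸ Nat.one_pos)
        have hx2' : x.2 = n := by simpa using hx2
        -- x ∈ t; contradiction with monotonicity: x.2 ≤ a.2 ... need chain
        -- directly: a.2 < n is impossible since a.2 ≥ x.2? use pairwise
        have hp : List.Pairwise (fun p q : ℤ × ℤ => q.2 ≤ p.2) (a :: t) := by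
          have := hw.2
          have htrans : Transitive (fun p q : ℤ × ℤ => q.2 ≤ p.2) := fun _ _ _ h1 h2 => le_trans h2 h1
          have : List.Chain' (fun p q : ℤ × ℤ => q.2 ≤ p.2) (a :: t) :=
            List.IsChain.imp (fun p q hpq => hpq.2.1) hw.2
          exact (@List.isChain_iff_pairwise _ (fun p q : ℤ × ℤ => q.2 ≤ p.2) _ ⟨fun h1 h2 => htrans h1 h2⟩).mp this
        have hax : x.2 ≤ a.2 := (List.pairwise_cons.mp hp).1 x hx
        have han : a.2 ≤ n := (hw.1 a (List.mem_cons_self)).2.2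
        omega
      refine ⟨by simp, by simpa using h0, ?_⟩
      rw [affineLength, List.countP_cons, if_pos (by simpa using h0)] at h
      have ht : t.countP (fun p => decide (p.2 = n)) = 0 := by omega
      intro i hi1 hi2
      simp only [List.length_cons] at hi2
      obtain ⟨j, rfl⟩ : ∃ j, i = j + 1 := ⟨i - 1, by omega⟩
      rw [List.getD_cons_succ, List.getD_eq_getElem t (0,0) (by simpa using hi2)]
      have := List.countP_eq_zero.mp ht _ (List.getElem_mem (by simpa using hi2))
      simpa using this
    · rintro ⟨-, h0, hrest⟩
      rw [affineLength, List.countP_cons, if_pos (by simpa using h0)]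
      have : t.countP (fun p => decide (p.2 = n)) = 0 := by
        rw [List.countP_eq_zero]
        intro x hx
        obtain ⟨j, hj, rfl⟩ := List.mem_iff_getElem.mp hx
        have := hrest (j+1) (by omega) (by simpa using hj)
        rw [List.getD_cons_succ, List.getD_eq_getElem t (0,0) hj] at this
        simpa using this
      omega


/-- a word whose first two columns both reach `n` cannot be contained -/
lemma notCT_wrong (u : List (ℤ × ℤ)) (hlen : 2 ≤ u.length)
    (h00 : ((u.getD 0 (0,0))).1 ≤ n) (h01 : ((u.getD 0 (0,0))).2 = n)
    (h10 : ((u.getD 1 (0,0))).1 ≤ n) (h11 : ((u.getD 1 (0,0))).2 = n)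
    (w : List (ℤ × ℤ)) (hPNF : IsPNF n w) (haff : affineLength n w = 1) :
    ¬ ContainsTranslate (grid w) (grid u) := by
  obtain ⟨hlen0, h0, hrest⟩ := (aff_one_iff hPNF).mp haff
  rintro ⟨s, hs⟩
  have hp1 : ((1:ℤ), n) ∈ grid u := ⟨0, by omega, by norm_num, by rw [h01]; exact ⟨h00, le_refl n⟩⟩
  have hp2 : ((2:ℤ), n) ∈ grid u := by
    refine ⟨1, by omega, by norm_num, ?_⟩
    rw [h11]
    exact ⟨h10, le_refl n⟩
  obtain ⟨i1, hi1len, hi1eq, -, hi1r⟩ := hs _ hp1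
  obtain ⟨i2, hi2len, hi2eq, -, hi2r⟩ := hs _ hp2
  simp only at hi1eq hi2eq
  have hii : (i2:ℤ) = (i1:ℤ) + 1 := by omega
  have hi2pos : 1 ≤ i2 := by
    have : (0:ℤ) ≤ i1 := by exact_mod_cast Int.ofNat_nonneg i1
    omega
  have hi22 : (w.getD i2 (0,0)).2 = n := le_antisymm (pnf_bounds hPNF hi2len).2.2 hi2r
  exact hrest i2 hi2pos hi2len hi22


section Params
variable (N m e : ℕ) (hnN : n = (N:ℤ)) (hN1 : 1 ≤ N) (hNme : N + 1 = 2 * m + e)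
  (he : e ≤ 1) (hm : 1 ≤ m)

section WithV
variable (v : List (ℤ × ℤ)) (hvlen : v.length = m + 1)
  (hvspec : ∀ i ≤ m, v.getD i (0,0) = (vlf n i, vrf n i))

include hnN hN1 hNme he hm hvlen hvspec

lemma vlf_le_vrf : ∀ i ≤ m, vlf n i ≤ vrf n i := by
  intro i hi
  rw [vlf, vrf]
  rcases eq_or_ne i 0 with rfl | h0
  · simp; omega
  · rw [if_neg h0]
    have : 2 * (i:ℤ) ≤ 2 * (m:ℤ) := by
      have : (i:ℤ) ≤ m := by exact_mod_cast hi
      omega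
    have h2 : 2 * (m:ℤ) ≤ (N:ℤ) + 1 := by
      have : (N:ℤ) + 1 = 2 * m + e := by exact_mod_cast hNme
      omega
    rw [max_le_iff]
    omega


lemma Q_of_CT (w : List (ℤ × ℤ)) (hPNF : IsPNF n w) (haff : affineLength n w = 1)
    (hCT : ContainsTranslate (grid w) (grid v)) : Qpred n m w := by
  obtain ⟨hlen0, h0, hrest⟩ := (aff_one_iff hPNF).mp haff
  obtain ⟨s, hs⟩ := hCT
  -- the point (1, n) lies in grid v
  have hv0 : ((1 : ℤ), n) ∈ grid v := by
    refine ⟨0, by omega, by norm_num, ?_⟩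
    rw [hvspec 0 (by omega)]
    constructor
    · show vlf n 0 ≤ n
      rw [vlf]
      simp
      omega
    · show n ≤ vrf n 0
      rw [vrf]
      simp
  have := hs _ hv0
  obtain ⟨i0, hi0len, hi0eq, hi0l, hi0r⟩ := this
  simp only at hi0eq hi0l hi0r
  have hi02 : (w.getD i0 (0,0)).2 = n := le_antisymm (pnf_bounds hPNF hi0len).2.2 hi0r
  have hi00 : i0 = 0 := by
    by_contra hne
    exact hrest i0 (by omega) hi0len hi02
  have hs0 : s = 0 := by
    rw [hi00] at hi0eq
    simp at hi0eq
    omega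
  subst hs0
  -- containment conditions
  have hcont : ∀ i ≤ m, i < w.length ∧ (w.getD i (0,0)).1 ≤ vlf n i ∧
      vrf n i ≤ (w.getD i (0,0)).2 := by
    intro i hi
    have hvl : ((i:ℤ) + 1, vlf n i) ∈ grid v := by
      refine ⟨i, by omega, rfl, ?_⟩
      rw [hvspec i hi]
      exact ⟨le_refl _, vlf_le_vrf N m e hnN hN1 hNme he hm v hvlen hvspec i hi⟩
    have hvr : ((i:ℤ) + 1, vrf n i) ∈ grid v := by
      refine ⟨i, by omega, rfl, ?_⟩
      rw [hvspec i hi]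
      exact ⟨vlf_le_vrf N m e hnN hN1 hNme he hm v hvlen hvspec i hi, le_refl _⟩
    obtain ⟨j1, hj1len, hj1eq, hj1l, hj1r⟩ := hs _ hvl
    obtain ⟨j2, hj2len, hj2eq, hj2l, hj2r⟩ := hs _ hvr
    simp only [add_zero] at hj1eq hj2eq
    have hj1i : j1 = i := by exact_mod_cast (by omega : (j1:ℤ) = (i:ℤ))
    have hj2i : j2 = i := by exact_mod_cast (by omega : (j2:ℤ) = (i:ℤ))
    subst hj1i; subst hj2i
    exact ⟨hj1len, hj1l, hj2r⟩
  refine ⟨hPNF, ?_, hrest, fun i hi => (hcont i hi).2⟩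
  have := (hcont m (le_refl m)).1
  omega


lemma CT_of_Q (w : List (ℤ × ℤ)) (hQ : Qpred n m w) :
    ContainsTranslate (grid w) (grid v) := by
  obtain ⟨hPNF, hlen, hrest, hcont⟩ := hQ
  refine ⟨0, ?_⟩
  rintro ⟨pa, pb⟩ ⟨i, hilen, hieq, hil, hir⟩
  have him : i ≤ m := by omega
  rw [hvspec i him] at hil hir
  simp only at hieq hil hir
  refine ⟨i, by omega, by simp [hieq], ?_, ?_⟩
  · exact le_trans (hcont i him).1 hil
  · exact le_trans hir (hcont i him).2


end WithV

include hnN hN1 hNme he hm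

lemma Q_iff_mem (w : List (ℤ × ℤ)) :
    Qpred n m w ↔ w ∈ ((LF e m N) ×ˢ (RF e m N)).image (Phi m n) := by
  have harith : (n:ℤ) = 2*(m:ℤ) - 1 + e := by omega
  constructor
  · rintro ⟨hPNF, hlen, hrest, hcont⟩
    have hw02 : (w.getD 0 (0,0)).2 = n := by
      refine le_antisymm (pnf_bounds hPNF (by omega)).2.2 ?_
      have := (hcont 0 (by omega)).2
      rwa [vrf, if_pos rfl] at this
    have hfst0 : ∀ i, m ≤ i → i < w.length → (w.getD i (0,0)).1 = 0 := by
      intro i him hi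
      have h1 : (w.getD m (0,0)).1 ≤ 0 := by
        have h2 := (hcont m le_rfl).1
        rw [vlf] at h2
        have h3 : max (n - 1 - 2*(m:ℤ)) 0 = 0 := max_eq_right (by omega)
        omega
      have h2 := pnf_fst_mono hPNF him hi
      have h3 := (pnf_bounds hPNF hi).1
      have h4 := pnf_fst_mono hPNF (le_refl m) (by omega : m < w.length)
      have h5 := pnf_fst_mono hPNF him hi
      -- (w.getD i).1 ≤ (w.getD m).1 ≤ 0 and ≥ 0
      have h6 : (w.getD i (0,0)).1 ≤ (w.getD m (0,0)).1 := pnf_fst_mono hPNF him hi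
      omega
    set ls : List ℤ := (w.map Prod.fst).take m with hls
    set rs : List ℤ := (w.map Prod.snd).drop 1 with hrs
    have hlsl : ls.length = m := by simp [hls]; omega
    have hrsl : rs.length = w.length - 1 := by simp [hrs]
    have hlsget : ∀ i (h : i < m), ls[i]'(by omega) = (w.getD i (0,0)).1 := by
      intro i h
      have hiw : i < w.length := by omega
      rw [List.getD_eq_getElem w (0,0) hiw]
      show (List.take m (List.map Prod.fst w))[i]'(by simp; omega) = w[i].1
      simp only [List.getElem_take, List.getElem_map]
    have hrsget : ∀ j (h : j < w.length - 1), rs[j]'(by omega) = (w.getD (j+1) (0,0)).2 := by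
      intro j h
      have hjw : 1 + j < w.length := by omega
      rw [List.getD_eq_getElem w (0,0) (by omega : j + 1 < w.length)]
      show (List.drop 1 (List.map Prod.snd w))[j]'(by simp; omega) = w[j+1].2
      rw [List.getElem_drop]
      simp only [List.getElem_map]
      congr 2
      omega
    refine Finset.mem_image.mpr ⟨(ls, rs), Finset.mem_product.mpr ⟨?_, ?_⟩, ?_⟩
    · show ls ∈ LF e m N
      rw [mem_LF]
      refine ⟨hlsl, ?_, ?_⟩
      · rw [chain'_iff_getElem]
        intro i hi
        simp only [List.length_cons, hlsl] at hi
        match i with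
        | 0 =>
          have h0 : (0:ℕ) < m := by omega
          show lrel ((N:ℤ)) (ls[0]'(by omega))
          rw [hlsget 0 h0]
          have h1 := (hcont 0 (by omega)).1
          rw [vlf] at h1
          have h2 : max (n - 1 - 2*((0:ℕ):ℤ)) 0 = n - 1 := by
            push_cast; rw [max_eq_left (by omega)]; ring
          rw [h2] at h1
          constructor
          · omega
          · intro hh; omega
        | j + 1 =>
          show lrel (ls[j]'(by omega)) (ls[j+1]'(by omega))
          rw [hlsget j (by omega), hlsget (j+1) (by omega)]
          have hcw := (chain'_iff_getElem _ w).mp hPNF.2 j (by omega)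
          rw [← List.getD_eq_getElem w (0,0) (by omega : j < w.length),
            ← List.getD_eq_getElem w (0,0) (by omega : j + 1 < w.length)] at hcw
          exact ⟨hcw.1, hcw.2.2.1⟩
      · intro i hi
        rw [List.getD_eq_getElem ls 0 (by omega), hlsget i hi]
        refine ⟨(pnf_bounds hPNF (by omega)).1, ?_⟩
        have h1 := (hcont i (by omega)).1
        rw [vlf] at h1
        have h2 : max (n - 1 - 2*((i:ℕ):ℤ)) 0 = n - 1 - 2*(i:ℤ) := max_eq_left (by omega)
        omega
    · show rs ∈ RF e m N
      rw [mem_RF]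
      refine ⟨by omega, ?_, ?_, ?_⟩
      · rw [chain'_iff_getElem]
        intro i hi
        simp only [List.length_cons, hrsl] at hi
        match i with
        | 0 =>
          show grel ((N:ℤ)) (rs[0]'(by omega))
          rw [hrsget 0 (by omega)]
          have h1 := (pnf_bounds hPNF (by omega : 0 + 1 < w.length)).2.2
          have h2 := hrest 1 (by omega) (by omega)
          show (w.getD (0+1) (0,0)).2 < (N:ℤ)
          simp only [Nat.zero_add] at h1 h2 ⊢
          omega
        | j + 1 =>
          show grel (rs[j]'(by omega)) (rs[j+1]'(by omega))
          rw [hrsget j (by omega), hrsget (j+1) (by omega)]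
          have hcw := (chain'_iff_getElem _ w).mp hPNF.2 (j+1) (by omega)
          rw [← List.getD_eq_getElem w (0,0) (by omega : j + 1 < w.length),
            ← List.getD_eq_getElem w (0,0) (by omega : j + 1 + 1 < w.length)] at hcw
          have h2 := hrest (j+1) (by omega) (by omega)
          have h3 := hcw.2.1
          have h4 := hcw.2.2.2
          rcases eq_or_lt_of_le h3 with heq | hlt
          · exact absurd (h4 heq) h2
          · exact hlt
      · intro x hx
        obtain ⟨j, hj, rfl⟩ := List.mem_iff_getElem.mp hx
        rw [hrsget j (by omega)]
        have := pnf_bounds hPNF (by omega : j + 1 < w.length)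
        omega
      · intro i hi
        rw [List.getD_eq_getElem rs 0 (by omega), hrsget i (by omega)]
        have h1 := (hcont (i+1) (by omega)).2
        rw [vrf, if_neg (by omega)] at h1
        push_cast at h1 ⊢
        omega
    · -- Phi (ls, rs) = w
      show (ls ++ List.replicate (rs.length + 1 - m) (0:ℤ)).zip ((n:ℤ) :: rs) = w
      have hrep : (List.replicate (rs.length + 1 - m) (0:ℤ)).length = w.length - m := by
        simp [hrsl]; omega
      have hLlen : (ls ++ List.replicate (rs.length + 1 - m) (0:ℤ)).length = w.length := by
        simp only [List.length_append, hlsl, hrep]; omega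
      have hRlen : ((n : ℤ) :: rs).length = w.length := by simp [hrsl]; omega
      refine List.ext_getElem (by rw [List.length_zip, hLlen, hRlen]; omega) ?_
      intro i h1 h2
      rw [List.getElem_zip]
      refine Prod.ext ?_ ?_
      · show (ls ++ List.replicate (rs.length + 1 - m) (0:ℤ))[i]'(by omega) = w[i].1
        rcases Nat.lt_or_ge i m with him | him
        · rw [List.getElem_append_left (by omega)]
          rw [hlsget i him, List.getD_eq_getElem w (0,0) (by omega)]
        · rw [List.getElem_append_right (by omega)]
          rw [List.getElem_replicate]
          have := hfst0 i him (by omega)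
          rw [List.getD_eq_getElem w (0,0) (by omega)] at this
          omega
      · show ((n:ℤ) :: rs)[i]'(by omega) = w[i].2
        match i with
        | 0 =>
          rw [List.getElem_cons_zero]
          rw [List.getD_eq_getElem w (0,0) (by omega)] at hw02
          exact hw02.symm
        | j + 1 =>
          rw [List.getElem_cons_succ, hrsget j (by omega),
            List.getD_eq_getElem w (0,0) (by omega)]
  · rintro hmem
    obtain ⟨⟨ls, rs⟩, hmem2, rfl⟩ := Finset.mem_image.mp hmem
    obtain ⟨hlmem, hrmem⟩ := Finset.mem_product.mp hmem2
    obtain ⟨hlsl, hlchain, hlbound⟩ := (mem_LF e m N ls).mp hlmem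
    obtain ⟨hrsl, hrchain, hrnn, hrbound⟩ := (mem_RF e m N rs).mp hrmem
    set t := rs.length with ht
    have hLlen : (ls ++ List.replicate (rs.length + 1 - m) (0:ℤ)).length = t + 1 := by
      simp only [List.length_append, hlsl, List.length_replicate]; omega
    have hRlen : ((n : ℤ) :: rs).length = t + 1 := by simp [ht]
    have hwlen : (Phi m n (ls, rs)).length = t + 1 := by
      show ((ls ++ List.replicate (rs.length + 1 - m) (0:ℤ)).zip ((n:ℤ) :: rs)).length = t + 1
      rw [List.length_zip, hLlen, hRlen]; omega
    have hrlt : ∀ j, j < t → rs.getD j 0 < (N:ℤ) := by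
      intro j h
      rw [List.getD_eq_getElem rs 0 (by omega)]
      exact chain_lt_all hrchain _ (List.getElem_mem (by omega))
    have hrnn2 : ∀ j, j < t → 0 ≤ rs.getD j 0 := by
      intro j h
      rw [List.getD_eq_getElem rs 0 (by omega)]
      exact hrnn _ (List.getElem_mem (by omega))
    have hgetf : ∀ i, i < t + 1 → ((Phi m n (ls, rs)).getD i (0,0)).1 =
        if i < m then ls.getD i 0 else 0 := by
      intro i h
      rw [List.getD_eq_getElem _ (0,0) (by omega)]
      show (((ls ++ List.replicate (rs.length + 1 - m) (0:ℤ)).zip ((n:ℤ) :: rs))[i]'(by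
        rw [List.length_zip, hLlen, hRlen]; omega)).1 = _
      rw [List.getElem_zip]
      show (ls ++ List.replicate (rs.length + 1 - m) (0:ℤ))[i]'(by omega) = _
      split
      · rename_i hi
        rw [List.getElem_append_left (by omega), List.getD_eq_getElem ls 0 (by omega)]
      · rename_i hi
        rw [List.getElem_append_right (by omega), List.getElem_replicate]
    have hgets : ∀ i, i < t + 1 → ((Phi m n (ls, rs)).getD i (0,0)).2 =
        if i = 0 then n else rs.getD (i-1) 0 := by
      intro i h
      rw [List.getD_eq_getElem _ (0,0) (by omega)]
      show (((ls ++ List.replicate (rs.length + 1 - m) (0:ℤ)).zip ((n:ℤ) :: rs))[i]'(by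
        rw [List.length_zip, hLlen, hRlen]; omega)).2 = _
      rw [List.getElem_zip]
      show ((n:ℤ) :: rs)[i]'(by omega) = _
      split
      · rename_i hi
        subst hi
        rw [List.getElem_cons_zero]
      · rename_i hi
        obtain ⟨j, rfl⟩ : ∃ j, i = j + 1 := ⟨i - 1, by omega⟩
        rw [List.getElem_cons_succ]
        simp only [Nat.add_sub_cancel]
        rw [List.getD_eq_getElem rs 0 (by omega)]
    -- chain facts on components
    have hlc' : List.Chain' lrel ls := hlchain.tail
    have hrc' : List.Chain' grel rs := hrchain.tail
    have hlcs : ∀ i, i + 1 < m → lrel (ls.getD i 0) (ls.getD (i+1) 0) := by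
      intro i hi
      have := (chain'_iff_getElem _ _).mp hlc' i (by omega)
      rwa [← List.getD_eq_getElem ls 0 (by omega), ← List.getD_eq_getElem ls 0 (by omega)] at this
    have hrcs : ∀ i, i + 1 < t → grel (rs.getD i 0) (rs.getD (i+1) 0) := by
      intro i hi
      have := (chain'_iff_getElem _ _).mp hrc' i (by omega)
      rwa [← List.getD_eq_getElem rs 0 (by omega), ← List.getD_eq_getElem rs 0 (by omega)] at this
    -- getD-based bounds
    refine ⟨⟨?_, ?_⟩, by omega, ?_, ?_⟩
    · -- entry bounds
      intro p hp
      obtain ⟨i, hi, rfl⟩ := List.mem_iff_getElem.mp hp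
      rw [hwlen] at hi
      rw [← List.getD_eq_getElem _ (0,0) (by omega : i < (Phi m n (ls, rs)).length)]
      rw [hgetf i hi, hgets i hi]
      by_cases hi0 : i = 0
      · subst hi0
        rw [if_pos (by omega), if_pos rfl]
        have := hlbound 0 (by omega)
        push_cast at this ⊢
        omega
      · rw [if_neg hi0]
        rcases Nat.lt_or_ge i m with him | him
        · rw [if_pos him]
          have h1 := hlbound i him
          have h2 := hrbound (i-1) (by omega)
          have h3 : ((i:ℤ)) = ((i - 1 : ℕ) : ℤ) + 1 := by push_cast; omega
          have h4 := hrlt (i-1) (by omega)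
          refine ⟨h1.1, by omega, by omega⟩
        · rw [if_neg (by omega)]
          have h4 := hrlt (i-1) (by omega)
          have h5 := hrnn2 (i-1) (by omega)
          exact ⟨le_refl 0, h5, by omega⟩
    · -- chain
      rw [chain'_iff_getElem]
      intro i hi
      rw [hwlen] at hi
      rw [← List.getD_eq_getElem _ (0,0) (by omega : i < (Phi m n (ls, rs)).length),
        ← List.getD_eq_getElem _ (0,0) (by omega : i + 1 < (Phi m n (ls, rs)).length)]
      refine ⟨?_, ?_, ?_, ?_⟩
      · rw [hgetf i (by omega), hgetf (i+1) (by omega)]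
        by_cases h2 : i + 1 < m
        · rw [if_pos h2, if_pos (by omega)]
          exact (hlcs i (by omega)).1
        · rw [if_neg h2]
          by_cases h1 : i < m
          · rw [if_pos h1]
            exact (hlbound i h1).1
          · rw [if_neg h1]
      · rw [hgets i (by omega), hgets (i+1) (by omega), if_neg (by omega : ¬ (i + 1 = 0))]
        split <;> rename_i h1
        · subst h1
          have := hrlt 0 (by omega)
          rw [hnN]
          simp only [Nat.add_sub_cancel]
          omega
        · obtain ⟨j, rfl⟩ : ∃ j, i = j + 1 := ⟨i - 1, by omega⟩
          have := hrcs j (by omega)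
          have h2 : (j + 1 + 1 - 1) = j + 1 := by omega
          have h3 : (j + 1 - 1) = j := by omega
          rw [h2, h3]
          exact le_of_lt this
      · rw [hgetf i (by omega), hgetf (i+1) (by omega)]
        by_cases h2 : i + 1 < m
        · rw [if_pos h2, if_pos (by omega)]
          exact (hlcs i (by omega)).2
        · rw [if_neg h2]
          by_cases h1 : i < m
          · rw [if_pos h1]
            exact fun h => h.symm
          · rw [if_neg h1]
            exact fun _ => rfl
      · rw [hgets i (by omega), hgets (i+1) (by omega), if_neg (by omega : ¬ (i + 1 = 0))]
        split <;> rename_i h1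
        · exact fun _ => rfl
        · obtain ⟨j, rfl⟩ : ∃ j, i = j + 1 := ⟨i - 1, by omega⟩
          have := hrcs j (by omega)
          have h2 : (j + 1 + 1 - 1) = j + 1 := by omega
          have h3 : (j + 1 - 1) = j := by omega
          rw [h2, h3]
          intro heq
          exact absurd heq (ne_of_lt this)
    · -- no further n's
      intro i hi1 hi2
      rw [hwlen] at hi2
      rw [hgets i (by omega), if_neg (by omega : ¬ i = 0)]
      have := hrlt (i-1) (by omega)
      rw [hnN]
      omega
    · -- containment bounds
      intro i hi
      rw [hgetf i (by omega), hgets i (by omega)]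
      constructor
      · split <;> rename_i h1
        · refine le_trans (hlbound i h1).2 ?_
          rw [vlf]
          refine le_trans ?_ (le_max_left _ _)
          omega
        · rw [vlf]
          exact le_max_right _ _
      · rw [vrf]
        by_cases h1 : i = 0
        · rw [if_pos h1, if_pos h1]
        · rw [if_neg h1, if_neg h1]
          have h2 := hrbound (i-1) (by omega)
          have h3 : ((i:ℤ)) = ((i - 1 : ℕ) : ℤ) + 1 := by push_cast; omega
          omega


lemma Phi_injOn : Set.InjOn (Phi m n) ↑((LF e m N) ×ˢ (RF e m N)) := by
  rintro ⟨ls1, rs1⟩ h1 ⟨ls2, rs2⟩ h2 heq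
  simp only [Finset.coe_product, Set.mem_prod, Finset.mem_coe] at h1 h2
  have hl1 : ls1.length = m := ((mem_LF e m N ls1).mp h1.1).1
  have hl2 : ls2.length = m := ((mem_LF e m N ls2).mp h2.1).1
  have e1 : ((ls1 ++ List.replicate (rs1.length + 1 - m) (0:ℤ)).zip ((n:ℤ) :: rs1)).map Prod.snd
      = (n:ℤ) :: rs1 := by
    refine List.map_snd_zip ?_
    simp only [List.length_cons, List.length_append, List.length_replicate, hl1]
    have := ((mem_RF e m N rs1).mp h1.2).1
    omega
  have e2 : ((ls2 ++ List.replicate (rs2.length + 1 - m) (0:ℤ)).zip ((n:ℤ) :: rs2)).map Prod.snd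
      = (n:ℤ) :: rs2 := by
    refine List.map_snd_zip ?_
    simp only [List.length_cons, List.length_append, List.length_replicate, hl2]
    have := ((mem_RF e m N rs2).mp h2.2).1
    omega
  have hPhi1 : Phi m n (ls1, rs1) = Phi m n (ls2, rs2) := heq
  have hrs : ((n:ℤ) :: rs1) = ((n:ℤ) :: rs2) := by
    rw [← e1, ← e2]
    show ((Phi m n (ls1, rs1)).map Prod.snd) = ((Phi m n (ls2, rs2)).map Prod.snd)
    rw [hPhi1]
  have hrs' : rs1 = rs2 := by
    have := (List.cons.injEq _ _ _ _).mp hrs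
    exact this.2
  have f1 : ((ls1 ++ List.replicate (rs1.length + 1 - m) (0:ℤ)).zip ((n:ℤ) :: rs1)).map Prod.fst
      = ls1 ++ List.replicate (rs1.length + 1 - m) (0:ℤ) := by
    refine List.map_fst_zip ?_
    simp only [List.length_cons, List.length_append, List.length_replicate, hl1]
    have := ((mem_RF e m N rs1).mp h1.2).1
    omega
  have f2 : ((ls2 ++ List.replicate (rs2.length + 1 - m) (0:ℤ)).zip ((n:ℤ) :: rs2)).map Prod.fst
      = ls2 ++ List.replicate (rs2.length + 1 - m) (0:ℤ) := by
    refine List.map_fst_zip ?_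
    simp only [List.length_cons, List.length_append, List.length_replicate, hl2]
    have := ((mem_RF e m N rs2).mp h2.2).1
    omega
  have hls : ls1 ++ List.replicate (rs1.length + 1 - m) (0:ℤ)
      = ls2 ++ List.replicate (rs2.length + 1 - m) (0:ℤ) := by
    rw [← f1, ← f2]
    show ((Phi m n (ls1, rs1)).map Prod.fst) = ((Phi m n (ls2, rs2)).map Prod.fst)
    rw [hPhi1]
  have hls' : ls1 = ls2 := by
    have t1 : (ls1 ++ List.replicate (rs1.length + 1 - m) (0:ℤ)).take m = ls1 :=
      List.take_left' hl1
    have t2 : (ls2 ++ List.replicate (rs2.length + 1 - m) (0:ℤ)).take m = ls2 :=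
      List.take_left' hl2
    rw [← t1, ← t2, hls]
  simp only [Prod.mk.injEq]
  exact ⟨hls', hrs'⟩

end Params
end Char

/-- For `n ≥ 1`: if `n` is even then `d(n,1) = C(n,0)²`, and if `n` is odd then
`4·d(n,1) = C(n,1)²`. -/
theorem numBadPNF_one_blobbedC (n : ℤ) (hn : 1 ≤ n) :
    (Even n → numBadPNF n 1 = blobbedC n 0 ^ 2) ∧
    (Odd n → 4 * numBadPNF n 1 = blobbedC n 1 ^ 2) := by

  have hnN : n = ((n.toNat : ℕ) : ℤ) := by omega
  set N := n.toNat with hN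
  have hN1 : 1 ≤ N := by omega
  have hkey : ∀ m : ℕ, 1 ≤ m → blobbedCAux (2*m+1) 1 = blobbedCAux (2*m) 2 := by
    intro m hm1
    obtain ⟨m', rfl⟩ : ∃ m', m = m' + 1 := ⟨m-1, by omega⟩
    rw [show 2*(m'+1)+1 = (2*m'+1)+2 from by omega, blobbedCAux_rec (2*m'+1) 0,
      show 2*m'+1+1 = 2*m'+2 from by omega, blobbedCAux_bot (2*m'), Nat.zero_add]
    congr 1 <;> omega
  constructor
  · -- even case
    intro hev
    have hevN : Even N := by
      rcases hev with ⟨r, hr⟩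
      exact ⟨r.toNat, by omega⟩
    obtain ⟨m, hNm⟩ := hevN
    have hNm : N = 2 * m := by omega
    have hm1 : 1 ≤ m := by omega
    have hNme : N + 1 = 2 * m + 1 := by omega
    obtain ⟨hvlen, hvspec0⟩ := wI_even_spec n N m hnN hNm hm1
    have hvspec : ∀ i ≤ m, (wI n).getD i (0,0) = (vlf n i, vrf n i) := by
      intro i hi
      rw [vlf, vrf]
      exact hvspec0 i hi
    obtain ⟨hulen, hu00, hu01, hu10, hu11⟩ := wJ_even_spec n hn hev
    have hiff : ∀ w, (IsPNF n w ∧ affineLength n w = 1 ∧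
        (ContainsTranslate (grid w) (grid (wI n)) ∨ ContainsTranslate (grid w) (grid (wJ n))))
        ↔ w ∈ ((LF 1 m N) ×ˢ (RF 1 m N)).image (Phi m n) := by
      intro w
      rw [← Q_iff_mem N m 1 hnN hN1 hNme (le_refl 1) hm1 w]
      constructor
      · rintro ⟨hPNF, haff, hCT | hCT⟩
        · exact Q_of_CT N m 1 hnN hN1 hNme (le_refl 1) hm1 (wI n) hvlen hvspec w hPNF haff hCT
        · exact absurd hCT (notCT_wrong (wJ n) hulen hu00 hu01 hu10 hu11 w hPNF haff)
      · intro hQ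
        have hPNF := hQ.1
        have hlen := hQ.2.1
        have haff : affineLength n w = 1 := by
          rw [aff_one_iff hPNF]
          refine ⟨by omega, ?_, hQ.2.2.1⟩
          refine le_antisymm (pnf_bounds hPNF (by omega)).2.2 ?_
          have := (hQ.2.2.2 0 (by omega)).2
          rwa [vrf, if_pos rfl] at this
        exact ⟨hPNF, haff,
          Or.inl (CT_of_Q N m 1 hnN hN1 hNme (le_refl 1) hm1 (wI n) hvlen hvspec w hQ)⟩
    have hcard : numBadPNF n 1 = (LF 1 m N).card * (RF 1 m N).card := by
      rw [numBadPNF, Nat.card_congr (Equiv.subtypeEquivRight hiff), Nat.card_eq_finsetCard,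
        Finset.card_image_of_injOn (Phi_injOn N m 1 hnN hN1 hNme (le_refl 1) hm1),
        Finset.card_product]
    rw [hcard, card_LF1 m N (by omega), card_RF1 m N (by omega)]
    have hbc : blobbedC n 0 = blobbedCAux (N+1) 1 := by
      rw [blobbedC]
      congr 1 <;> omega
    rw [hbc]
    have e1 : blobbedCAux N (2*m+2-N) = blobbedCAux (2*m) 2 := by
      congr 1 <;> omega
    have e2 : blobbedCAux (N+1) (N+1-2*m) = blobbedCAux (2*m+1) 1 := by
      congr 1 <;> omega
    have e3 : blobbedCAux (N+1) 1 = blobbedCAux (2*m+1) 1 := by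
      congr 1 <;> omega
    rw [e1, e2, e3, hkey m hm1]
    ring
  · -- odd case
    intro hodd
    have hoddN : ¬ Even N := by
      intro ⟨r, hr⟩
      rcases hodd with ⟨r', hr'⟩
      omega
    have hodd' : ¬ Even n := by
      intro ⟨r, hr⟩
      rcases hodd with ⟨r', hr'⟩
      omega
    obtain ⟨m, hNm⟩ : ∃ m, N + 1 = 2 * m := by
      refine ⟨(N+1)/2, ?_⟩
      rcases Nat.even_or_odd N with h | h
      · exact absurd h hoddN
      · obtain ⟨r, hr⟩ := h
        omega
    have hm1 : 1 ≤ m := by omega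
    have hNme : N + 1 = 2 * m + 0 := by omega
    obtain ⟨hvlen, hvspec0⟩ := wJ_odd_spec n N m hnN hNm hm1
    have hvspec : ∀ i ≤ m, (wJ n).getD i (0,0) = (vlf n i, vrf n i) := by
      intro i hi
      rw [vlf, vrf]
      exact hvspec0 i hi
    obtain ⟨hulen, hu00, hu01, hu10, hu11⟩ := wI_odd_spec n hn hodd'
    have hiff : ∀ w, (IsPNF n w ∧ affineLength n w = 1 ∧
        (ContainsTranslate (grid w) (grid (wI n)) ∨ ContainsTranslate (grid w) (grid (wJ n))))
        ↔ w ∈ ((LF 0 m N) ×ˢ (RF 0 m N)).image (Phi m n) := by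
      intro w
      rw [← Q_iff_mem N m 0 hnN hN1 hNme (by omega) hm1 w]
      constructor
      · rintro ⟨hPNF, haff, hCT | hCT⟩
        · exact absurd hCT (notCT_wrong (wI n) hulen hu00 hu01 hu10 hu11 w hPNF haff)
        · exact Q_of_CT N m 0 hnN hN1 hNme (by omega) hm1 (wJ n) hvlen hvspec w hPNF haff hCT
      · intro hQ
        have hPNF := hQ.1
        have hlen := hQ.2.1
        have haff : affineLength n w = 1 := by
          rw [aff_one_iff hPNF]
          refine ⟨by omega, ?_, hQ.2.2.1⟩
          refine le_antisymm (pnf_bounds hPNF (by omega)).2.2 ?_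
          have := (hQ.2.2.2 0 (by omega)).2
          rwa [vrf, if_pos rfl] at this
        exact ⟨hPNF, haff,
          Or.inr (CT_of_Q N m 0 hnN hN1 hNme (by omega) hm1 (wJ n) hvlen hvspec w hQ)⟩
    have hcard : numBadPNF n 1 = (LF 0 m N).card * (RF 0 m N).card := by
      rw [numBadPNF, Nat.card_congr (Equiv.subtypeEquivRight hiff), Nat.card_eq_finsetCard,
        Finset.card_image_of_injOn (Phi_injOn N m 0 hnN hN1 hNme (by omega) hm1),
        Finset.card_product]
    have hfour : 4 * numBadPNF n 1 = (2 * (LF 0 m N).card) * (2 * (RF 0 m N).card) := by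
      rw [hcard]; ring
    rw [hfour, card_LF0 m hm1 N (by omega) (by omega), card_RF0 m N (by omega)]
    have hbc : blobbedC n 1 = blobbedCAux (N+1) 2 := by
      rw [blobbedC]
      congr 1 <;> omega
    rw [hbc]
    have e1 : blobbedCAux (N+1) (2*m+1-N) = blobbedCAux (2*m) 2 := by
      congr 1 <;> omega
    have e2 : blobbedCAux (N+2) (N+2-2*m) = blobbedCAux (2*m+1) 1 := by
      congr 1 <;> omega
    have e3 : blobbedCAux (N+1) 2 = blobbedCAux (2*m) 2 := by
      congr 1 <;> omega
    rw [e1, e2, e3, hkey m hm1]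
    ring
end
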